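/- If G is a finite simple graph with m edges, then scp(G)² / (2m + scp(G)) ≤ cp(G), where if G has no edges both sides are interpreted as 0. -/

import Mathlib

open Finset

/-- A clique covering of `G`: a finite family of cliques covering every edge. -/
def IsCliqueCover {V : Type*} (G : SimpleGraph V) (𝒞 : Finset (Finset V)) : Prop :=
  (∀ C ∈ 𝒞, G.IsClique (C : Set V)) ∧
  ∀ u v, G.Adj u v → ∃ C ∈ 𝒞, u ∈ C ∧ v ∈ C

/-- A clique partition of `G`: every edge lies in exactly one clique of the family. -/
def IsCliquePartition {V : Type*} (G : SimpleGraph V) (𝒞 : Finset (Finset V)) : Prop :=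
  (∀ C ∈ 𝒞, G.IsClique (C : Set V)) ∧
  ∀ u v, G.Adj u v → ∃! C, C ∈ 𝒞 ∧ u ∈ C ∧ v ∈ C

/-- The sigma clique cover number: minimum total size of cliques in a clique covering. -/
noncomputable def scc {V : Type*} (G : SimpleGraph V) : ℕ :=
  sInf {k | ∃ 𝒞, IsCliqueCover G 𝒞 ∧ ∑ C ∈ 𝒞, C.card = k}

/-- The sigma clique partition number: minimum total size of cliques in a clique partition. -/
noncomputable def scp {V : Type*} (G : SimpleGraph V) : ℕ :=
  sInf {k | ∃ 𝒞, IsCliquePartition G 𝒞 ∧ ∑ C ∈ 𝒞, C.card = k}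

/-- The clique cover number: minimum number of cliques in a clique covering. -/
noncomputable def cc {V : Type*} (G : SimpleGraph V) : ℕ :=
  sInf {k | ∃ 𝒞, IsCliqueCover G 𝒞 ∧ 𝒞.card = k}

/-- The clique partition number: minimum number of cliques in a clique partition. -/
noncomputable def cp {V : Type*} (G : SimpleGraph V) : ℕ :=
  sInf {k | ∃ 𝒞, IsCliquePartition G 𝒞 ∧ 𝒞.card = k}

/-- `scc'`: the minimum total size of cliques over clique coverings achieving `cc G`. -/
noncomputable def scc' {V : Type*} (G : SimpleGraph V) : ℕ :=
  sInf {k | ∃ 𝒞, IsCliqueCover G 𝒞 ∧ 𝒞.card = cc G ∧ ∑ C ∈ 𝒞, C.card = k}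

/-- If `G` has `m` edges, then `scp(G)² / (2m + scp(G)) ≤ cp(G)`
(if `G` has no edges both sides are `0`, as `0 / 0 = 0` in `ℝ`). -/


noncomputable def pairSet {V : Type*} [DecidableEq V] : Sym2 V → Finset V :=
  Sym2.lift ⟨fun u v => {u, v}, fun u v => Finset.pair_comm u v⟩

lemma exists_partition {V : Type*} [Fintype V] [DecidableEq V] (G : SimpleGraph V)
    [DecidableRel G.Adj] :
    (∀ C ∈ G.edgeFinset.image pairSet, G.IsClique (C : Set V)) ∧
    ∀ u v, G.Adj u v → ∃! C, C ∈ G.edgeFinset.image pairSet ∧ u ∈ C ∧ v ∈ C := by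
  constructor
  · intro C hC
    simp only [mem_image] at hC
    obtain ⟨e, he, rfl⟩ := hC
    induction e with
    | _ u v =>
      rw [SimpleGraph.mem_edgeFinset, SimpleGraph.mem_edgeSet] at he
      simp only [pairSet, Sym2.lift_mk, coe_insert, coe_singleton]
      exact SimpleGraph.isClique_pair.2 fun _ => he
  · intro u v huv
    refine ⟨{u, v}, ⟨mem_image.2 ⟨s(u,v), by simp [huv], by simp [pairSet]⟩, by simp, by simp⟩, ?_⟩
    rintro C ⟨hC, huC, hvC⟩
    simp only [mem_image] at hC
    obtain ⟨e, he, rfl⟩ := hC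
    induction e with
    | _ a b =>
      rw [SimpleGraph.mem_edgeFinset, SimpleGraph.mem_edgeSet] at he
      simp only [pairSet, Sym2.lift_mk] at huC hvC ⊢
      have hsub : ({u, v} : Finset V) ⊆ {a, b} := by
        intro x hx
        rcases mem_insert.1 hx with rfl | hx
        · exact huC
        · rw [mem_singleton] at hx; subst hx; exact hvC
      refine (eq_of_subset_of_card_le hsub ?_).symm
      rw [card_pair huv.ne]
      exact card_insert_le _ _



lemma real_arith (a S k M : ℝ) (ha : 0 ≤ a) (hM : 0 ≤ M) (hk : 0 ≤ k)
    (h2 : a ≤ S) (h1 : S ^ 2 ≤ k * (2 * M + S)) : a ^ 2 / (2 * M + a) ≤ k := by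
  rcases eq_or_lt_of_le ha with h0 | hapos
  · rw [← h0]
    simp only [ne_eq, OfNat.ofNat_ne_zero, not_false_eq_true, zero_pow, zero_div]
    exact hk
  · have hden : (0:ℝ) < 2 * M + a := by positivity
    rw [div_le_iff₀ hden]
    have hSpos : (0:ℝ) < S := lt_of_lt_of_le hapos h2
    have hdenS : (0:ℝ) < 2 * M + S := by positivity
    have d1 : a ^ 2 * (2 * M + S) ≤ S ^ 2 * (2 * M + a) := by
      nlinarith [mul_nonneg hM (sub_nonneg.2 h2),
        mul_nonneg (mul_nonneg ha hSpos.le) (sub_nonneg.2 h2),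
        mul_nonneg (mul_nonneg ha ha) (sub_nonneg.2 h2)]
    have d2 : S ^ 2 * (2 * M + a) ≤ k * (2 * M + S) * (2 * M + a) :=
      mul_le_mul_of_nonneg_right h1 hden.le
    have d3 := d1.trans d2
    nlinarith [d3, hdenS]

set_option maxHeartbeats 1000000 in
theorem stmt_7 {V : Type*} [Fintype V] [DecidableEq V] (G : SimpleGraph V)
    [DecidableRel G.Adj] (m : ℕ) (hm : m = G.edgeFinset.card) :
    (scp G : ℝ) ^ 2 / (2 * m + scp G) ≤ (cp G : ℝ) := by
  have hpart : IsCliquePartition G (G.edgeFinset.image pairSet) := exists_partition G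
  have hcpmem : cp G ∈ {k | ∃ 𝒞, IsCliquePartition G 𝒞 ∧ 𝒞.card = k} :=
    Nat.sInf_mem ⟨_, _, hpart, rfl⟩
  obtain ⟨𝒞, h𝒞, hcard⟩ := hcpmem
  have hscp : scp G ≤ ∑ C ∈ 𝒞, C.card := Nat.sInf_le ⟨𝒞, h𝒞, rfl⟩
  have hkey : ∑ C ∈ 𝒞, C.offDiag.card ≤ 2 * m := by
    rw [hm, SimpleGraph.two_mul_card_edgeFinset]
    rw [← card_biUnion]
    · apply card_le_card
      refine biUnion_subset.2 fun C hC => ?_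
      intro p hp
      rw [mem_offDiag] at hp
      simp only [mem_filter, mem_univ, true_and]
      exact h𝒞.1 C hC hp.1 hp.2.1 hp.2.2
    · intro C hC D hD hne
      rw [Function.onFun, Finset.disjoint_left]
      intro p hpC hpD
      rw [mem_offDiag] at hpC hpD
      have hadj : G.Adj p.1 p.2 := h𝒞.1 C hC hpC.1 hpC.2.1 hpC.2.2
      obtain ⟨E, -, hE⟩ := h𝒞.2 p.1 p.2 hadj
      exact hne ((hE C ⟨hC, hpC.1, hpC.2.1⟩).trans (hE D ⟨hD, hpD.1, hpD.2.1⟩).symm)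
  have hsq : ∑ C ∈ 𝒞, C.card ^ 2 ≤ 2 * m + ∑ C ∈ 𝒞, C.card := by
    have h : ∑ C ∈ 𝒞, C.card ^ 2 = ∑ C ∈ 𝒞, (C.offDiag.card + C.card) := by
      refine sum_congr rfl fun C _ => ?_
      rw [offDiag_card, sq]
      rcases Nat.eq_zero_or_pos C.card with h0 | hpos
      · simp [h0]
      · rw [Nat.sub_add_cancel (Nat.le_mul_of_pos_left _ hpos)]
    rw [h, sum_add_distrib]
    exact Nat.add_le_add_right hkey _
  have hCS : ((∑ C ∈ 𝒞, C.card : ℕ) : ℝ) ^ 2 ≤ (cp G : ℝ) * ((∑ C ∈ 𝒞, C.card ^ 2 : ℕ) : ℝ) := by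
    rw [← hcard]
    push_cast
    exact sq_sum_le_card_mul_sum_sq
  set a : ℝ := (scp G : ℝ) with ha_def
  set k : ℝ := (cp G : ℝ)
  set Sr : ℝ := ((∑ C ∈ 𝒞, C.card : ℕ) : ℝ) with hSr_def
  have hM : (0:ℝ) ≤ (m : ℝ) := Nat.cast_nonneg _
  have hk : (0:ℝ) ≤ k := Nat.cast_nonneg _
  have ha : (0:ℝ) ≤ a := Nat.cast_nonneg _
  have h2 : a ≤ Sr := Nat.cast_le.2 hscp
  have h1 : Sr ^ 2 ≤ k * (2 * (m:ℝ) + Sr) := by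
    refine hCS.trans ?_
    apply mul_le_mul_of_nonneg_left _ hk
    calc ((∑ C ∈ 𝒞, C.card ^ 2 : ℕ) : ℝ) ≤ ((2 * m + ∑ C ∈ 𝒞, C.card : ℕ) : ℝ) :=
      Nat.cast_le.2 hsq
    _ = 2 * (m:ℝ) + Sr := by rw [hSr_def]; push_cast; ring
  exact real_arith a Sr k (m:ℝ) ha hM hk h2 h1
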